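/- (Convergence of the G-term in probability with the empirical mean plugged in.) Fix w_0 > 0 and w_max > 0, and let G : ℝ⁴ → ℝ be continuous and uniformly equicontinuous in its second argument on the relevant compact range: for every ε > 0 there exists δ > 0 such that |G(x,a,w_0,ξ) − G(x,b,w_0,ξ)| < ε whenever x, a, b ∈ [0,w_max], ξ ∈ ℝ and |a − b| < δ. For each n let Θ_n be a nonempty set and let W^{(1)}_n(θ),…,W^{(n)}_n(θ), θ ∈ Θ_n, be [0,w_max]-valued random variables on a common probability space such that, for each θ, the W^{(j)}_n(θ) (j = 1,…,n) are identically distributed with common mean m_n(θ). Assume: (H1) sup_{θ∈Θ_n} |(1/n)∑_{j=1}^n W^{(j)}_n(θ) − m_n(θ)| → 0 in probability; and (H2) sup_{(θ,ξ)∈Θ_n×ℝ} |(1/n)∑_{j=1}^n G(W^{(j)}_n(θ), m_n(θ), w_0, ξ) − E[G(W^{(1)}_n(θ), m_n(θ), w_0, ξ)]| → 0 in probability. Then sup_{(θ,ξ)∈Θ_n×ℝ} |(1/n)∑_{j=1}^n G(W^{(j)}_n(θ), (1/n)∑_{k=1}^n W^{(k)}_n(θ), w_0, ξ) − E[G(W^{(1)}_n(θ),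 m_n(θ), w_0, ξ)]| → 0 in probability as n → ∞. -/

import Mathlib

open MeasureTheory Filter

/-- **Convergence of the `G`-term in probability with the empirical mean plugged in.**
Under uniform equicontinuity of `G` in its second argument on `[0,w_max]`, a uniform
law of large numbers for the wealths (H1) and a uniform law of large numbers for the
`G`-term with the true mean plugged in (H2), the empirical `G`-term with the
empirical mean plugged in converges, uniformly in `(θ,ξ)`, to
`E[G(W⁽¹⁾_n(θ), m_n(θ), w₀, ξ)]` in probability.  Here convergence in probability of
`sup_{(θ,ξ)} |S_n(θ,ξ)|` to `0` is expressed as: for every `ε > 0`,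
`μ {ω | ∃ θ ξ, ε < |S_n(θ,ξ)(ω)|} → 0`. -/
theorem G_term_convergence_in_probability
    {Ω : Type*} [MeasurableSpace Ω] (μ : Measure Ω) [IsProbabilityMeasure μ]
    (w0 wmax : ℝ) (hw0 : 0 < w0) (hwmax : 0 < wmax)
    (G : ℝ → ℝ → ℝ → ℝ → ℝ)
    (hGcont : Continuous fun x : ℝ × ℝ × ℝ × ℝ => G x.1 x.2.1 x.2.2.1 x.2.2.2)
    (hGequi : ∀ ε > 0, ∃ δ > 0, ∀ x ∈ Set.Icc (0 : ℝ) wmax,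
      ∀ a ∈ Set.Icc (0 : ℝ) wmax, ∀ b ∈ Set.Icc (0 : ℝ) wmax, ∀ ξ : ℝ,
        |a - b| < δ → |G x a w0 ξ - G x b w0 ξ| < ε)
    (Θ : ℕ → Type*) (hΘ : ∀ n, Nonempty (Θ n))
    (W : (n : ℕ) → Θ n → ℕ → Ω → ℝ)
    (hWmeas : ∀ n (θ : Θ n) (j : ℕ), Measurable (W n θ j))
    (hWbdd : ∀ n (θ : Θ n) (j : ℕ) (ω : Ω), W n θ j ω ∈ Set.Icc 0 wmax)
    (mn : (n : ℕ) → Θ n → ℝ)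
    (hident : ∀ n (θ : Θ n) (j k : ℕ),
      ProbabilityTheory.IdentDistrib (W n θ j) (W n θ k) μ μ)
    (hmean : ∀ n (θ : Θ n) (j : ℕ), (∫ ω, W n θ j ω ∂μ) = mn n θ)
    (H1 : ∀ ε > 0, Tendsto (fun n : ℕ => μ {ω | ∃ θ : Θ n,
        ε < |(∑ j ∈ Finset.range n, W n θ j ω) / n - mn n θ|}) atTop (nhds 0))
    (H2 : ∀ ε > 0, Tendsto (fun n : ℕ => μ {ω | ∃ θ : Θ n, ∃ ξ : ℝ,
        ε < |(∑ j ∈ Finset.range n, G (W n θ j ω) (mn n θ) w0 ξ) / n -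
          ∫ ω', G (W n θ 0 ω') (mn n θ) w0 ξ ∂μ|}) atTop (nhds 0)) :
    ∀ ε > 0, Tendsto (fun n : ℕ => μ {ω | ∃ θ : Θ n, ∃ ξ : ℝ,
        ε < |(∑ j ∈ Finset.range n,
              G (W n θ j ω) ((∑ k ∈ Finset.range n, W n θ k ω) / n) w0 ξ) / n -
          ∫ ω', G (W n θ 0 ω') (mn n θ) w0 ξ ∂μ|}) atTop (nhds 0) := by
  intro ε hε
  obtain ⟨δ, hδ, hG⟩ := hGequi (ε/2) (by positivity)
  have hB1 := H1 (δ/2) (by positivity)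
  have hB2 := H2 (ε/2) (by positivity)
  have hbound : ∀ᶠ n in atTop, μ {ω | ∃ θ : Θ n, ∃ ξ : ℝ,
        ε < |(∑ j ∈ Finset.range n,
              G (W n θ j ω) ((∑ k ∈ Finset.range n, W n θ k ω) / n) w0 ξ) / n -
          ∫ ω', G (W n θ 0 ω') (mn n θ) w0 ξ ∂μ|}
      ≤ μ {ω | ∃ θ : Θ n,
          δ/2 < |(∑ j ∈ Finset.range n, W n θ j ω) / n - mn n θ|}
        + μ {ω | ∃ θ : Θ n, ∃ ξ : ℝ,
          ε/2 < |(∑ j ∈ Finset.range n, G (W n θ j ω) (mn n θ) w0 ξ) / n -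
            ∫ ω', G (W n θ 0 ω') (mn n θ) w0 ξ ∂μ|} := by
    filter_upwards [eventually_ge_atTop 1] with n hn
    refine le_trans (measure_mono ?_) (measure_union_le _ _)
    intro ω hω
    obtain ⟨θ, ξ, hωA⟩ := hω
    by_contra hc
    simp only [Set.mem_union, Set.mem_setOf_eq, not_or, not_exists, not_lt] at hc
    obtain ⟨hc1, hc2⟩ := hc
    have hn0 : (0:ℝ) < n := by exact_mod_cast Nat.lt_of_lt_of_le Nat.zero_lt_one hn
    set mbar : ℝ := (∑ k ∈ Finset.range n, W n θ k ω) / n with hmbar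
    have hS0 : 0 ≤ ∑ k ∈ Finset.range n, W n θ k ω :=
      Finset.sum_nonneg fun j _ => (hWbdd n θ j ω).1
    have hSw : (∑ k ∈ Finset.range n, W n θ k ω) ≤ n * wmax := by
      calc (∑ k ∈ Finset.range n, W n θ k ω) ≤ ∑ _k ∈ Finset.range n, wmax :=
            Finset.sum_le_sum fun j _ => (hWbdd n θ j ω).2
        _ = n * wmax := by simp [Finset.sum_const, Finset.card_range, mul_comm]
    have hmbar_mem : mbar ∈ Set.Icc (0:ℝ) wmax := by
      constructor
      · exact div_nonneg hS0 (le_of_lt hn0)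
      · rw [hmbar, div_le_iff₀ hn0]
        linarith [hSw]
    have hint : Integrable (W n θ 0) μ := by
      refine Integrable.mono' (integrable_const wmax)
        (hWmeas n θ 0).aestronglyMeasurable ?_
      filter_upwards with ω'
      rw [Real.norm_eq_abs, abs_le]
      exact ⟨by linarith [(hWbdd n θ 0 ω').1], (hWbdd n θ 0 ω').2⟩
    have hm_mem : mn n θ ∈ Set.Icc (0:ℝ) wmax := by
      rw [← hmean n θ 0]
      constructor
      · exact integral_nonneg fun ω' => (hWbdd n θ 0 ω').1
      · calc (∫ ω', W n θ 0 ω' ∂μ) ≤ ∫ _ω', wmax ∂μ :=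
              integral_mono hint (integrable_const _) fun ω' => (hWbdd n θ 0 ω').2
          _ = wmax := by simp
    have hclose : |mbar - mn n θ| < δ := lt_of_le_of_lt (hc1 θ) (by linarith)
    have hdiff : ∀ j ∈ Finset.range n,
        |G (W n θ j ω) mbar w0 ξ - G (W n θ j ω) (mn n θ) w0 ξ| < ε/2 :=
      fun j _ => hG _ (hWbdd n θ j ω) mbar hmbar_mem (mn n θ) hm_mem ξ hclose
    have hsum : |∑ j ∈ Finset.range n,
        (G (W n θ j ω) mbar w0 ξ - G (W n θ j ω) (mn n θ) w0 ξ)| < n * (ε/2) := by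
      refine lt_of_le_of_lt (Finset.abs_sum_le_sum_abs _ _) ?_
      have := Finset.sum_lt_sum_of_nonempty
        (Finset.nonempty_range_iff.mpr (by omega)) hdiff
      simpa [Finset.sum_const, Finset.card_range, nsmul_eq_mul] using this
    have hSnTn : |(∑ j ∈ Finset.range n, G (W n θ j ω) mbar w0 ξ) / n -
        (∑ j ∈ Finset.range n, G (W n θ j ω) (mn n θ) w0 ξ) / n| < ε/2 := by
      rw [div_sub_div_same, ← Finset.sum_sub_distrib, abs_div,
        abs_of_pos hn0, div_lt_iff₀ hn0]
      linarith [hsum]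
    have hTnE := hc2 θ ξ
    have htri : |(∑ j ∈ Finset.range n, G (W n θ j ω) mbar w0 ξ) / n -
        ∫ ω', G (W n θ 0 ω') (mn n θ) w0 ξ ∂μ| < ε := by
      calc |(∑ j ∈ Finset.range n, G (W n θ j ω) mbar w0 ξ) / n -
            ∫ ω', G (W n θ 0 ω') (mn n θ) w0 ξ ∂μ|
          ≤ |(∑ j ∈ Finset.range n, G (W n θ j ω) mbar w0 ξ) / n -
              (∑ j ∈ Finset.range n, G (W n θ j ω) (mn n θ) w0 ξ) / n| +
            |(∑ j ∈ Finset.range n, G (W n θ j ω) (mn n θ) w0 ξ) / n -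
              ∫ ω', G (W n θ 0 ω') (mn n θ) w0 ξ ∂μ| := abs_sub_le _ _ _
        _ < ε := by linarith
    exact absurd hωA (not_lt.mpr (le_of_lt htri))
  refine tendsto_of_tendsto_of_tendsto_of_le_of_le'
    tendsto_const_nhds ?_ (Eventually.of_forall fun n => zero_le) hbound
  simpa using hB1.add hB2
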